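/- For any parameterized density matrix ρ_θ and vector of observables O = (O_1,…,O_K) with invertible covariance matrix, the generalized signal-to-noise ratio (dm/dθ)ᵀ C^{-1} (dm/dθ) is bounded above by the quantum Fisher information, where m(θ) = (⟨O_1⟩_{ρ_θ},…,⟨O_K⟩_{ρ_θ}) and C_{ij} = ½⟨{O_i - ⟨O_i⟩, O_j - ⟨O_j⟩}⟩_{ρ_θ}. -/

import Mathlib

open Matrix Complex Finset
open scoped ComplexOrder

namespace SNRQFI
variable {n : ℕ} (R : Matrix (Fin n) (Fin n) ℂ)

noncomputable def phi (A B : Matrix (Fin n) (Fin n) ℂ) : ℝ := ((R * (A * B)).trace).re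

lemma phi_symm (hR : R.IsHermitian) {A B : Matrix (Fin n) (Fin n) ℂ}
    (hA : A.IsHermitian) (hB : B.IsHermitian) : phi R A B = phi R B A := by
  have h : (R * (A * B)).trace = star ((R * (B * A)).trace) := by
    rw [← Matrix.trace_conjTranspose]
    have e : (R * (B * A))ᴴ = A * B * R := by
      rw [Matrix.conjTranspose_mul, Matrix.conjTranspose_mul, hA.eq, hB.eq, hR.eq, mul_assoc]
    rw [e, Matrix.trace_mul_comm, mul_assoc]
  unfold phi
  rw [h, Complex.star_def, Complex.conj_re]

lemma trace_re_nonneg {M : Matrix (Fin n) (Fin n) ℂ} (hM : M.PosSemidef) :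
    0 ≤ (M.trace).re := by
  have h : ∀ i, 0 ≤ (M i i).re := by
    intro i
    have := hM.re_dotProduct_nonneg (Pi.single i 1)
    simpa [dotProduct, Matrix.mulVec, Pi.single_apply, Finset.mul_sum] using this
  rw [Matrix.trace]
  simpa [Matrix.diag] using Finset.sum_nonneg (fun i (_ : i ∈ Finset.univ) => h i)

lemma phi_nonneg (hR : R.PosSemidef) {A : Matrix (Fin n) (Fin n) ℂ}
    (hA : A.IsHermitian) : 0 ≤ phi R A A := by
  have e : (A * R * Aᴴ).trace = (R * (A * A)).trace := by
    rw [hA.eq, Matrix.trace_mul_cycle, ← Matrix.trace_mul_comm]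
  have := trace_re_nonneg (hR.mul_mul_conjTranspose_same A)
  unfold phi
  rw [← e]; exact this

lemma phi_add_left (A B D : Matrix (Fin n) (Fin n) ℂ) :
    phi R (A + B) D = phi R A D + phi R B D := by
  unfold phi
  rw [add_mul, mul_add, Matrix.trace_add, Complex.add_re]

lemma phi_smul_left (c : ℝ) (A D : Matrix (Fin n) (Fin n) ℂ) :
    phi R ((c : ℂ) • A) D = c * phi R A D := by
  unfold phi
  rw [Matrix.smul_mul, Matrix.mul_smul, Matrix.trace_smul]
  simp [smul_eq_mul, Complex.mul_re]

lemma phi_sub_left (A B D : Matrix (Fin n) (Fin n) ℂ) :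
    phi R (A - B) D = phi R A D - phi R B D := by
  unfold phi
  rw [sub_mul, mul_sub, Matrix.trace_sub, Complex.sub_re]

lemma phi_add_right (A B D : Matrix (Fin n) (Fin n) ℂ) :
    phi R D (A + B) = phi R D A + phi R D B := by
  unfold phi
  rw [mul_add, mul_add, Matrix.trace_add, Complex.add_re]

lemma phi_sub_right (A B D : Matrix (Fin n) (Fin n) ℂ) :
    phi R D (A - B) = phi R D A - phi R D B := by
  unfold phi
  rw [mul_sub, mul_sub, Matrix.trace_sub, Complex.sub_re]

lemma phi_smul_right (c : ℝ) (A D : Matrix (Fin n) (Fin n) ℂ) :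
    phi R D ((c : ℂ) • A) = c * phi R D A := by
  unfold phi
  rw [Matrix.mul_smul, Matrix.mul_smul, Matrix.trace_smul]
  simp [smul_eq_mul, Complex.mul_re]

lemma phi_sum_left {K : ℕ} (f : Fin K → Matrix (Fin n) (Fin n) ℂ)
    (D : Matrix (Fin n) (Fin n) ℂ) :
    phi R (∑ i, f i) D = ∑ i, phi R (f i) D := by
  unfold phi
  rw [Finset.sum_mul, Matrix.mul_sum, Matrix.trace_sum, Complex.re_sum]

lemma phi_sum_right {K : ℕ} (f : Fin K → Matrix (Fin n) (Fin n) ℂ)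
    (D : Matrix (Fin n) (Fin n) ℂ) :
    phi R D (∑ i, f i) = ∑ i, phi R D (f i) := by
  unfold phi
  rw [Matrix.mul_sum, Matrix.mul_sum, Matrix.trace_sum, Complex.re_sum]

lemma phi_cs (hR : R.PosSemidef) {X Y : Matrix (Fin n) (Fin n) ℂ}
    (hX : X.IsHermitian) (hY : Y.IsHermitian) :
    phi R X Y ^ 2 ≤ phi R X X * phi R Y Y := by
  have key : ∀ t : ℝ, 0 ≤ phi R Y Y * (t * t) + (2 * phi R X Y) * t + phi R X X := by
    intro t
    have hsm : ((t : ℂ) • Y).IsHermitian := by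
      rw [Matrix.IsHermitian, Matrix.conjTranspose_smul, hY.eq, Complex.star_def,
        Complex.conj_ofReal]
    have h := phi_nonneg R hR (A := X + (t : ℂ) • Y) (hX.add hsm)
    have e : phi R (X + (t : ℂ) • Y) (X + (t : ℂ) • Y)
        = phi R Y Y * (t * t) + (2 * phi R X Y) * t + phi R X X := by
      simp only [phi_add_left, phi_add_right, phi_smul_left, phi_smul_right,
        phi_symm R hR.1 hY hX]
      ring
    linarith [e ▸ h]
  have hd := discrim_le_zero key
  unfold discrim at hd
  nlinarith [hd]

end SNRQFI

open SNRQFI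

/-- The generalized signal-to-noise ratio of a vector of observables `O = (O₁,…,O_K)` with
invertible (symmetrized) covariance matrix `C` is bounded above by the quantum Fisher
information `F(θ) = Tr(ρ_θ L²)`, where `L` is the symmetric logarithmic derivative:
`(dm/dθ)ᵀ C⁻¹ (dm/dθ) ≤ F(θ)` with `m_i(θ) = ⟨O_i⟩_{ρ_θ}`. -/
theorem snr_le_qfi (n K : ℕ) (ρ : ℝ → Matrix (Fin n) (Fin n) ℂ) (θ : ℝ)
    (hρherm : ∀ t, (ρ t).IsHermitian) (hρpos : ∀ t, (ρ t).PosSemidef)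
    (hρtr : ∀ t, (ρ t).trace = 1)
    (ρ' : Matrix (Fin n) (Fin n) ℂ)
    (hρ' : ∀ i j, HasDerivAt (fun t => ρ t i j) (ρ' i j) θ)
    (L : Matrix (Fin n) (Fin n) ℂ) (hL : L.IsHermitian)
    (hSLD : ρ' = (1 / 2 : ℂ) • (L * ρ θ + ρ θ * L))
    (O : Fin K → Matrix (Fin n) (Fin n) ℂ) (hO : ∀ i, (O i).IsHermitian)
    (m' : Fin K → ℝ)
    (hm' : ∀ i, HasDerivAt (fun t => ((ρ t * O i).trace).re) (m' i) θ)
    (C : Matrix (Fin K) (Fin K) ℝ)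
    (hC : ∀ i j, C i j =
      ((ρ θ * ((1 / 2 : ℂ) • (O i * O j + O j * O i))).trace).re
        - ((ρ θ * O i).trace).re * ((ρ θ * O j).trace).re)
    (hCpd : C.PosDef) :
    ∑ i, ∑ j, m' i * C⁻¹ i j * m' j ≤ ((ρ θ * (L * L)).trace).re := by
  classical
  set R := ρ θ with hRdef
  have hRh : R.IsHermitian := hρherm θ
  have hRp : R.PosSemidef := hρpos θ
  set m : Fin K → ℝ := fun i => ((R * O i).trace).re with hmdef
  -- derivative of trace is zero
  have htrρ' : ρ'.trace = 0 := by
    have h1 : HasDerivAt (fun t => (ρ t).trace) ρ'.trace θ := by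
      simp only [Matrix.trace, Matrix.diag]
      exact HasDerivAt.fun_sum (fun i _ => hρ' i i)
    have h2 : HasDerivAt (fun t => (ρ t).trace) 0 θ := by
      have e : (fun t => (ρ t).trace) = fun _ => (1 : ℂ) := funext hρtr
      rw [e]; exact hasDerivAt_const θ 1
    exact h1.unique h2
  -- m' in terms of ρ'
  have hm'eq : ∀ i, m' i = ((ρ' * O i).trace).re := by
    intro i
    have h1 : HasDerivAt (fun t => (ρ t * O i).trace) ((ρ' * O i).trace) θ := by
      simp only [Matrix.trace, Matrix.diag, Matrix.mul_apply]
      exact HasDerivAt.fun_sum (fun a _ => HasDerivAt.fun_sum (fun b _ => (hρ' a b).mul_const (O i b a)))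
    have h2 : HasDerivAt (fun t => ((ρ t * O i).trace).re) (((ρ' * O i).trace).re) θ := by
      exact Complex.reCLM.hasFDerivAt.comp_hasDerivAt θ h1
    exact (hm' i).unique h2
  -- phi R 1 L = 0
  have htrRL : ((R * L).trace).re = 0 := by
    have h : ρ'.trace = (R * L).trace := by
      rw [hSLD, Matrix.trace_smul, Matrix.trace_add, Matrix.trace_mul_comm L R, smul_eq_mul]
      ring
    rw [← h, htrρ']
    simp
  have hphi1L : phi R 1 L = 0 := by
    unfold SNRQFI.phi
    rw [one_mul]; exact htrRL
  -- m' i = phi R (O i) L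
  have hm'phi : ∀ i, m' i = phi R (O i) L := by
    intro i
    rw [hm'eq i, hSLD]
    have e : ((1 / 2 : ℂ) • (L * R + R * L) * O i).trace
        = (1 / 2 : ℂ) * ((R * (O i * L)).trace + (R * (L * O i)).trace) := by
      rw [Matrix.smul_mul, Matrix.trace_smul, smul_eq_mul, add_mul, Matrix.trace_add]
      congr 2
      · rw [Matrix.trace_mul_comm, Matrix.trace_mul_cycle']
      · rw [mul_assoc]
    rw [e]
    have hsymm := phi_symm R hRh hL (hO i)
    unfold SNRQFI.phi at hsymm ⊢
    rw [Complex.mul_re]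
    simp only [Complex.add_re, Complex.add_im]
    norm_num
    linarith [hsymm]
  -- C in terms of phi
  have hCphi : ∀ i j, C i j = phi R (O i) (O j) - m i * m j := by
    intro i j
    rw [hC i j]
    have e : ((R * ((1 / 2 : ℂ) • (O i * O j + O j * O i))).trace).re
        = (1 / 2) * (phi R (O i) (O j) + phi R (O j) (O i)) := by
      rw [Matrix.mul_smul, Matrix.trace_smul, smul_eq_mul, mul_add, Matrix.trace_add]
      unfold SNRQFI.phi
      rw [Complex.mul_re]
      simp only [Complex.add_re, Complex.add_im]
      norm_num
    rw [e, phi_symm R hRh (hO j) (hO i), hmdef]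
    ring
  -- centered observables
  set Ot : Fin K → Matrix (Fin n) (Fin n) ℂ := fun i => O i - ((m i : ℂ)) • 1 with hOtdef
  have hOtHerm : ∀ i, (Ot i).IsHermitian := by
    intro i
    rw [hOtdef, Matrix.IsHermitian, Matrix.conjTranspose_sub, (hO i).eq,
      Matrix.conjTranspose_smul, Matrix.conjTranspose_one, Complex.star_def, Complex.conj_ofReal]
  have hphiO1 : ∀ i, phi R (O i) 1 = m i := by
    intro i; unfold SNRQFI.phi; rw [mul_one]
  have hphi1O : ∀ j, phi R 1 (O j) = m j := by
    intro j; unfold SNRQFI.phi; rw [one_mul]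
  have hphi11 : phi R 1 1 = 1 := by
    unfold SNRQFI.phi
    rw [one_mul, mul_one, ← hRdef] at *
    rw [show R.trace = 1 from hρtr θ]
    simp
  -- phi (Ot i) L = m' i
  have hOtL : ∀ i, phi R (Ot i) L = m' i := by
    intro i
    rw [hOtdef]
    simp only [phi_sub_left, phi_smul_left, hphi1L, hm'phi i]
    ring
  -- phi (Ot i) (Ot j) = C i j
  have hOtOt : ∀ i j, phi R (Ot i) (Ot j) = C i j := by
    intro i j
    rw [hOtdef]
    simp only [phi_sub_left, phi_sub_right, phi_smul_left, phi_smul_right,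
      hphiO1, hphi1O, hphi11]
    rw [hCphi i j]
    ring
  -- the weight vector
  set w : Fin K → ℝ := fun i => ∑ j, C⁻¹ i j * m' j with hwdef
  set X : Matrix (Fin n) (Fin n) ℂ := ∑ i, ((w i : ℂ)) • Ot i with hXdef
  have hXh : X.IsHermitian := by
    rw [hXdef]
    apply Finset.sum_induction _ Matrix.IsHermitian (fun a b ha hb => ha.add hb)
      Matrix.isHermitian_zero
    intro i _
    rw [Matrix.IsHermitian, Matrix.conjTranspose_smul, (hOtHerm i).eq, Complex.star_def,
      Complex.conj_ofReal]
  -- C * C⁻¹ = 1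
  have hCC : C * C⁻¹ = 1 :=
    Matrix.mul_nonsing_inv C (isUnit_iff_ne_zero.mpr hCpd.det_pos.ne')
  have hCw : ∀ i, ∑ j, C i j * w j = m' i := by
    intro i
    have e : ∑ j, C i j * w j = ∑ k, (C * C⁻¹) i k * m' k := by
      simp only [hwdef, Finset.mul_sum, Matrix.mul_apply, Finset.sum_mul]
      rw [Finset.sum_comm]
      exact Finset.sum_congr rfl fun k _ => Finset.sum_congr rfl fun j _ => by ring
    rw [e, hCC]
    simp [Matrix.one_apply]
  -- the SNR value
  set S : ℝ := ∑ i, ∑ j, m' i * C⁻¹ i j * m' j with hSdef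
  have hSw : S = ∑ i, w i * m' i := by
    rw [hSdef]
    apply Finset.sum_congr rfl
    intro i _
    rw [hwdef]
    simp only [Finset.sum_mul, Finset.mul_sum]
    exact Finset.sum_congr rfl fun j _ => by ring
  have hXL : phi R X L = S := by
    rw [hXdef, phi_sum_left]
    simp only [phi_smul_left, hOtL]
    rw [hSw]
  have hXX : phi R X X = S := by
    rw [hXdef, phi_sum_left]
    have e : ∀ i, phi R (Ot i) (∑ j, ((w j : ℂ)) • Ot j) = ∑ j, w j * C i j := by
      intro i
      rw [phi_sum_right]
      exact Finset.sum_congr rfl fun j _ => by rw [phi_smul_right, hOtOt i j]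
    calc ∑ i, phi R (((w i : ℂ)) • Ot i) (∑ j, ((w j : ℂ)) • Ot j)
        = ∑ i, w i * ∑ j, w j * C i j := by
          refine Finset.sum_congr rfl fun i _ => ?_
          rw [phi_smul_left, e i]
      _ = ∑ i, w i * m' i := by
          refine Finset.sum_congr rfl fun i _ => ?_
          congr 1
          rw [← hCw i]
          exact Finset.sum_congr rfl fun j _ => by ring
      _ = S := hSw.symm
  have hSnn : 0 ≤ S := by
    have h := hCpd.inv.posSemidef.dotProduct_mulVec_nonneg m'
    have e : star m' ⬝ᵥ (C⁻¹ *ᵥ m') = S := by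
      rw [hSdef]
      simp only [star_trivial, dotProduct, Matrix.mulVec, Finset.mul_sum]
      exact Finset.sum_congr rfl fun i _ => Finset.sum_congr rfl fun j _ => by ring
    rw [← e]; exact h
  have hcs := phi_cs R hRp hXh hL
  rw [hXL, hXX] at hcs
  have hFnn : 0 ≤ phi R L L := phi_nonneg R hRp hL
  have goal' : S ≤ phi R L L := by
    rcases eq_or_lt_of_le hSnn with h | h
    · rw [← h]; exact hFnn
    · nlinarith [hcs]
  exact goal'
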